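/- Let n ≥ 1 and φ: ℝ → ℝ be (n+1)-times continuously differentiable near 0. If for every n-times continuously differentiable function f: ℝ → ℝ there exists a function e_n with e_n(x) → 0 as x → a such that f(x) = ∑_{k=0}^{n} (f^(k)(a)/k!) (φ(x-a))^k + e_n(x) (φ(x-a))^n for all x near a, then necessarily φ(0) = 0, φ'(0) = 1, and φ^(k)(0) = 0 for 2 ≤ k ≤ n. -/

import Mathlib

open Filter

open Asymptotics Topology Set in
/-- iterated derivative of a polynomial evaluation. -/
private lemma iteratedDeriv_polyEval (k : ℕ) (p : Polynomial ℝ) :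
    iteratedDeriv k (fun x => p.eval x) = fun x => (Polynomial.derivative^[k] p).eval x := by
  induction k generalizing p with
  | zero => simp
  | succ k ih =>
    rw [iteratedDeriv_succ']
    have hd : deriv (fun x => p.eval x) = fun x => (Polynomial.derivative p).eval x := by
      funext x; exact Polynomial.deriv (p := p)
    rw [hd, ih, Function.iterate_succ_apply]

open Asymptotics Topology Set in
private lemma iteratedDerivWithin_eq_iteratedDeriv_of_isOpen {f : ℝ → ℝ} {s : Set ℝ} {x : ℝ}
    (hs : IsOpen s) (hx : x ∈ s) (k : ℕ) :
    iteratedDerivWithin k f s x = iteratedDeriv k f x := by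
  rw [iteratedDerivWithin_eq_iteratedFDerivWithin, iteratedDeriv_eq_iteratedFDeriv,
    iteratedFDerivWithin_of_isOpen k hs hx]

open Asymptotics Topology Set in
/-- Peano form of the Taylor remainder (qualitative): a `C^m` function whose first `m`
iterated derivatives vanish at `0` is `o(t^m)`. -/
private lemma peano_littleO : ∀ (m : ℕ) (h : ℝ → ℝ) (s : Set ℝ), IsOpen s → (0:ℝ) ∈ s →
    ContDiffOn ℝ m h s → (∀ k ≤ m, iteratedDeriv k h 0 = 0) →
    (fun t => h t) =o[𝓝 (0:ℝ)] fun t => t ^ m := by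
  intro m
  induction m with
  | zero =>
    intro h s hs h0 hh hz
    have hc : ContinuousAt h 0 := hh.continuousOn.continuousAt (hs.mem_nhds h0)
    have ht : Tendsto h (𝓝 0) (𝓝 0) := by
      have := hc.tendsto
      rwa [show h 0 = 0 by simpa using hz 0 le_rfl] at this
    simpa using (isLittleO_one_iff ℝ).2 ht
  | succ m ih =>
    intro h s hs h0 hh hz
    have hd : ContDiffOn ℝ m (deriv h) s :=
      hh.deriv_of_isOpen hs (by exact_mod_cast le_rfl)
    have hz' : ∀ k ≤ m, iteratedDeriv k (deriv h) 0 = 0 := by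
      intro k hk
      have := hz (k+1) (by omega)
      rwa [iteratedDeriv_succ'] at this
    have hIH := ih (deriv h) s hs h0 hd hz'
    have hdiff : ∀ x ∈ s, HasDerivAt h (deriv h x) x := by
      intro x hx
      exact ((hh.differentiableOn (by simp)).differentiableAt
        (hs.mem_nhds hx)).hasDerivAt
    have h00 : h 0 = 0 := by simpa using hz 0 (Nat.zero_le _)
    rw [isLittleO_iff] at hIH ⊢
    intro c hc
    obtain ⟨δ₁, hδ₁, hδ⟩ := Metric.eventually_nhds_iff.mp (hIH hc)
    obtain ⟨δ₂, hδ₂, hsub⟩ := Metric.mem_nhds_iff.mp (hs.mem_nhds h0)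
    have hδm : 0 < min δ₁ δ₂ := lt_min hδ₁ hδ₂
    rw [Metric.eventually_nhds_iff]
    refine ⟨min δ₁ δ₂, hδm, fun t ht => ?_⟩
    have hseg : segment ℝ 0 t ⊆ Metric.ball 0 (min δ₁ δ₂) :=
      (convex_ball _ _).segment_subset (Metric.mem_ball_self hδm) (by simpa [dist_zero_right] using ht)
    have hseg_cb : segment ℝ 0 t ⊆ Metric.closedBall 0 ‖t‖ :=
      (convex_closedBall _ _).segment_subset (Metric.mem_closedBall_self (norm_nonneg t))
        (by simp [dist_zero_right])
    have hseg_s : segment ℝ 0 t ⊆ s := fun y hy =>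
      hsub (Metric.ball_subset_ball (min_le_right _ _) (hseg hy))
    have key := (convex_segment (0:ℝ) t).norm_image_sub_le_of_norm_hasDerivWithin_le
      (f := h) (f' := deriv h) (C := c * ‖t‖ ^ m)
      (fun y hy => (hdiff y (hseg_s hy)).hasDerivWithinAt)
      (fun y hy => by
        have hy1 : ‖y‖ ≤ ‖t‖ := by
          have := hseg_cb hy
          simpa [dist_zero_right] using this
        have hy2 : dist y 0 < δ₁ := by
          have := hseg hy
          simp only [Metric.mem_ball] at this
          exact lt_of_lt_of_le this (min_le_left _ _)
        calc ‖deriv h y‖ ≤ c * ‖y ^ m‖ := hδ hy2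
          _ ≤ c * ‖t‖ ^ m := by
              rw [norm_pow]
              exact mul_le_mul_of_nonneg_left (pow_le_pow_left₀ (norm_nonneg y) hy1 m) hc.le)
      (left_mem_segment ℝ 0 t) (right_mem_segment ℝ 0 t)
    rw [h00, sub_zero, sub_zero] at key
    calc ‖h t‖ ≤ c * ‖t‖ ^ m * ‖t‖ := key
      _ = c * ‖t ^ (m+1)‖ := by rw [norm_pow]; ring

open Asymptotics Topology Set in
/-- Uniqueness of polynomial asymptotic expansions at `0`. -/
private lemma poly_isLittleO_zero : ∀ (m : ℕ) (b : ℕ → ℝ),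
    ((fun t : ℝ => ∑ j ∈ Finset.range (m+1), b j * t ^ j) =o[𝓝[≠] (0:ℝ)] fun t => t ^ m) →
    ∀ j ≤ m, b j = 0 := by
  intro m
  induction m with
  | zero =>
    intro b hb j hj
    interval_cases j
    have h1 : Tendsto (fun _ : ℝ => b 0) (𝓝[≠] (0:ℝ)) (𝓝 (b 0)) := tendsto_const_nhds
    have hb' : (fun _ : ℝ => b 0) =o[𝓝[≠] (0:ℝ)] (fun _ => (1:ℝ)) := by
      have e1 : (fun t : ℝ => ∑ j ∈ Finset.range 1, b j * t ^ j) = fun _ : ℝ => b 0 := by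
        funext t; simp
      have e2 : (fun t : ℝ => t ^ 0) = fun _ : ℝ => (1:ℝ) := by funext t; simp
      rw [e1, e2] at hb
      exact hb
    exact tendsto_nhds_unique h1 ((isLittleO_one_iff ℝ).1 hb')
  | succ m ih =>
    intro b hb
    have hb0 : b 0 = 0 := by
      have hcont : Tendsto (fun t : ℝ => ∑ j ∈ Finset.range (m+2), b j * t ^ j)
          (𝓝[≠] (0:ℝ)) (𝓝 (∑ j ∈ Finset.range (m+2), b j * (0:ℝ) ^ j)) := by
        exact ((continuous_finset_sum _ fun j _ =>
          (continuous_const.mul (continuous_pow j))).tendsto 0).mono_left nhdsWithin_le_nhds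
      have hval : (∑ j ∈ Finset.range (m+2), b j * (0:ℝ) ^ j) = b 0 := by
        rw [Finset.sum_eq_single 0]
        · simp
        · intro k hk hk0; simp [zero_pow hk0]
        · intro hk; simp at hk
      rw [hval] at hcont
      have htz : Tendsto (fun t : ℝ => t ^ (m+1)) (𝓝[≠] (0:ℝ)) (𝓝 0) := by
        have : Tendsto (fun t : ℝ => t ^ (m+1)) (𝓝 (0:ℝ)) (𝓝 0) := by
          simpa using (continuous_pow (m+1)).tendsto (0:ℝ)
        exact this.mono_left nhdsWithin_le_nhds
      exact tendsto_nhds_unique hcont (hb.isBigO.trans_tendsto htz)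
    have hfact : ∀ t : ℝ, (∑ j ∈ Finset.range (m+2), b j * t ^ j)
        = t * ∑ j ∈ Finset.range (m+1), b (j+1) * t ^ j := by
      intro t
      rw [Finset.sum_range_succ', hb0, Finset.mul_sum]
      simp only [mul_zero, zero_mul, add_zero]
      exact Finset.sum_congr rfl fun j _ => by ring
    have hg : (fun t : ℝ => ∑ j ∈ Finset.range (m+1), b (j+1) * t ^ j) =o[𝓝[≠] (0:ℝ)]
        fun t => t ^ m := by
      rw [isLittleO_iff] at hb ⊢
      intro c hc
      filter_upwards [hb hc, self_mem_nhdsWithin] with t h1 h2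
      have ht0 : t ≠ 0 := h2
      rw [hfact t] at h1
      have htpos : 0 < ‖t‖ := norm_pos_iff.mpr ht0
      have h1' : ‖t‖ * ‖∑ j ∈ Finset.range (m+1), b (j+1) * t ^ j‖
          ≤ ‖t‖ * (c * ‖t ^ m‖) := by
        calc ‖t‖ * ‖∑ j ∈ Finset.range (m+1), b (j+1) * t ^ j‖
            = ‖t * ∑ j ∈ Finset.range (m+1), b (j+1) * t ^ j‖ := (norm_mul _ _).symm
          _ ≤ c * ‖t ^ (m+1)‖ := h1
          _ = ‖t‖ * (c * ‖t ^ m‖) := by rw [norm_pow, norm_pow]; ring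
      exact le_of_mul_le_mul_left h1' htpos
    have hrest := ih (fun j => b (j+1)) hg
    intro j hj
    rcases j with _ | j
    · exact hb0
    · exact hrest j (by omega)

/-- necessity direction of the nonstandard Taylor theorem. -/
theorem nonstandard_taylor_necessity (n : ℕ) (hn : 1 ≤ n) (a : ℝ) (φ : ℝ → ℝ)
    (hφ : ∃ U ∈ nhds (0:ℝ), ContDiffOn ℝ (n+1) φ U)
    (H : ∀ f : ℝ → ℝ, ContDiff ℝ n f →
      ∃ e : ℝ → ℝ, Tendsto e (nhds a) (nhds 0) ∧
        ∀ᶠ x in nhds a, f x = (∑ k ∈ Finset.range (n+1),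
          iteratedDeriv k f a / (Nat.factorial k : ℝ) * (φ (x - a))^k)
          + e x * (φ (x - a))^n) :
    φ 0 = 0 ∧ deriv φ 0 = 1 ∧ ∀ k, 2 ≤ k → k ≤ n → iteratedDeriv k φ 0 = 0 := by
  classical
  obtain ⟨U, hU, hφU⟩ := hφ
  obtain ⟨r, hr, hball⟩ := Metric.mem_nhds_iff.mp hU
  set s : Set ℝ := Metric.ball (0:ℝ) r with hs_def
  have hs : IsOpen s := Metric.isOpen_ball
  have h0s : (0:ℝ) ∈ s := Metric.mem_ball_self hr
  have hφs : ContDiffOn ℝ (n+1) φ s := hφU.mono hball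
  -- Apply the hypothesis to f = fun x => x - a.
  have hf : ContDiff ℝ n (fun x : ℝ => x - a) := contDiff_id.sub contDiff_const
  obtain ⟨e, he, heq⟩ := H _ hf
  -- the iterated derivatives of x ↦ x - a
  have hiter : ∀ k, iteratedDeriv k (fun x : ℝ => x - a)
      = fun x => (Polynomial.derivative^[k] (Polynomial.X - Polynomial.C a)).eval x := by
    intro k
    have : (fun x : ℝ => x - a) = fun x => (Polynomial.X - Polynomial.C a).eval x := by
      funext x; simp
    rw [this, iteratedDeriv_polyEval]
  have hsum : ∀ y : ℝ, (∑ k ∈ Finset.range (n+1),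
      iteratedDeriv k (fun x : ℝ => x - a) a / (Nat.factorial k : ℝ) * y ^ k) = y := by
    intro y
    rw [Finset.sum_eq_single_of_mem 1 (Finset.mem_range.mpr (by omega))]
    · rw [hiter]
      simp
    · intro k hk hk1
      rcases Nat.lt_or_ge k 2 with hk2 | hk2
      · interval_cases k
        · rw [hiter]; simp
        · omega
      · have : Polynomial.derivative^[k] (Polynomial.X - Polynomial.C a) = 0 := by
          apply Polynomial.iterate_derivative_eq_zero
          rw [Polynomial.natDegree_X_sub_C]
          omega
        rw [hiter, this]
        simp
  have heq' : ∀ᶠ x in nhds a, x - a = φ (x - a) + e x * (φ (x - a))^n := by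
    filter_upwards [heq] with x hx
    rwa [hsum] at hx
  -- e a = 0
  have hea : e a = 0 :=
    tendsto_nhds_unique (tendsto_pure_nhds e a) (he.mono_left (pure_le_nhds a))
  -- φ 0 = 0
  have hφ0 : φ 0 = 0 := by
    have := heq'.self_of_nhds
    simp only [sub_self, hea, zero_mul, add_zero] at this
    exact this.symm
  -- pull everything back to a neighbourhood of 0
  have hmap : Tendsto (fun t : ℝ => t + a) (nhds 0) (nhds a) := by
    have : Continuous (fun t : ℝ => t + a) := continuous_id.add continuous_const
    simpa using this.tendsto 0
  have hteq : ∀ᶠ t in nhds (0:ℝ), t = φ t + e (t + a) * (φ t)^n := by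
    filter_upwards [hmap.eventually heq'] with t ht
    simpa using ht
  -- φ = O(t) near 0
  have hCA : ContDiffAt ℝ (n+1) φ 0 := hφs.contDiffAt (hs.mem_nhds h0s)
  have hφd : HasDerivAt φ (deriv φ 0) 0 :=
    (hCA.differentiableAt (by simp)).hasDerivAt
  have hO : (fun t : ℝ => φ t) =O[nhds 0] fun t => t := by
    have := hφd.hasFDerivAt.isBigO_sub
    simpa [hφ0] using this
  -- the error term is o(t^n)
  have hEn : (fun t : ℝ => e (t + a) * (φ t)^n) =o[nhds 0] fun t => t ^ n := by
    have h1 : (fun t : ℝ => e (t + a)) =o[nhds (0:ℝ)] (fun _ => (1:ℝ)) :=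
      (Asymptotics.isLittleO_one_iff ℝ).2 (he.comp hmap)
    have h2 : (fun t : ℝ => (φ t) ^ n) =O[nhds 0] fun t => t ^ n := hO.pow n
    simpa using h1.mul_isBigO h2
  -- φ t - t = o(t^n)
  have hφt : (fun t : ℝ => φ t - t) =o[nhds (0:ℝ)] fun t => t ^ n := by
    refine hEn.neg_left.congr' ?_ Filter.EventuallyEq.rfl
    filter_upwards [hteq] with t ht
    linarith
  -- the Taylor polynomial of φ at 0
  set c : ℕ → ℝ := fun j => iteratedDeriv j φ 0 / (Nat.factorial j : ℝ) with hc_def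
  set p : Polynomial ℝ := ∑ j ∈ Finset.range (n+1), Polynomial.C (c j) * Polynomial.X ^ j
    with hp_def
  have hpeval : ∀ t : ℝ, p.eval t = ∑ j ∈ Finset.range (n+1), c j * t ^ j := by
    intro t
    rw [hp_def, Polynomial.eval_finset_sum]
    exact Finset.sum_congr rfl fun j _ => by simp
  have hpcoeff : ∀ k ≤ n, p.coeff k = c k := by
    intro k hk
    rw [hp_def, Polynomial.finset_sum_coeff]
    have : ∀ j ∈ Finset.range (n+1),
        (Polynomial.C (c j) * Polynomial.X ^ j).coeff k = if j = k then c j else 0 := by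
      intro j _
      rw [Polynomial.coeff_C_mul, Polynomial.coeff_X_pow]
      by_cases h : j = k
      · simp [h]
      · rw [if_neg (fun hkj => h hkj.symm), if_neg h, mul_zero]
    rw [Finset.sum_congr rfl this, Finset.sum_ite_eq' (Finset.range (n+1)) k]
    simp [Finset.mem_range.mpr (by omega : k < n + 1)]
  have hpC : ContDiff ℝ n fun t : ℝ => p.eval t := by
    have h1 : ContDiff ℝ n fun t : ℝ => ∑ j ∈ Finset.range (n+1), c j * t ^ j :=
      ContDiff.sum fun j _ => contDiff_const.mul (contDiff_id.pow j)
    have : (fun t : ℝ => p.eval t) = fun t : ℝ => ∑ j ∈ Finset.range (n+1), c j * t ^ j := by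
      funext t; exact hpeval t
    rwa [this]
  -- iterated derivatives of p at 0
  have hpderiv : ∀ k ≤ n, iteratedDeriv k (fun t : ℝ => p.eval t) 0 = iteratedDeriv k φ 0 := by
    intro k hk
    have h1 : iteratedDeriv k (fun t : ℝ => p.eval t) 0
        = ((Polynomial.derivative (R := ℝ))^[k] p).coeff 0 := by
      rw [iteratedDeriv_polyEval]
      exact (Polynomial.coeff_zero_eq_eval_zero _).symm
    rw [h1, Polynomial.coeff_iterate_derivative]
    simp only [zero_add, Nat.descFactorial_self, nsmul_eq_mul]
    rw [hpcoeff k hk]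
    simp only [hc_def]
    field_simp
  -- g := φ - p is C^n with vanishing derivatives up to n at 0
  set g : ℝ → ℝ := φ - fun t => p.eval t with hg_def
  have hgC : ContDiffOn ℝ n g s := (hφs.of_le (by exact_mod_cast Nat.le_succ n)).sub
    (hpC.contDiffOn)
  have hgz : ∀ k ≤ n, iteratedDeriv k g 0 = 0 := by
    intro k hk
    have h1 : iteratedDerivWithin k g s 0
        = iteratedDerivWithin k φ s 0 - iteratedDerivWithin k (fun t : ℝ => p.eval t) s 0 := by
      apply iteratedDerivWithin_sub h0s hs.uniqueDiffOn
      · exact (hφs.contDiffWithinAt h0s).of_le (by exact_mod_cast le_trans hk (Nat.le_succ n))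
      · exact (hpC.of_le (by exact_mod_cast hk)).contDiffWithinAt
    rw [iteratedDerivWithin_eq_iteratedDeriv_of_isOpen hs h0s,
      iteratedDerivWithin_eq_iteratedDeriv_of_isOpen hs h0s,
      iteratedDerivWithin_eq_iteratedDeriv_of_isOpen hs h0s] at h1
    rw [h1, hpderiv k hk, sub_self]
  -- Peano: g = o(t^n)
  have hgo : (fun t => g t) =o[nhds (0:ℝ)] fun t => t ^ n :=
    peano_littleO n g s hs h0s hgC hgz
  -- combine: the polynomial p.eval t - t is o(t^n)
  have hpo : (fun t : ℝ => p.eval t - t) =o[nhds (0:ℝ)] fun t => t ^ n := by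
    have := hφt.sub hgo
    refine this.congr' ?_ Filter.EventuallyEq.rfl
    filter_upwards with t
    simp [hg_def]
  -- write p.eval t - t as a polynomial in standard form
  set b : ℕ → ℝ := fun j => c j - (if j = 1 then 1 else 0) with hb_def
  have hbo : (fun t : ℝ => ∑ j ∈ Finset.range (n+1), b j * t ^ j) =o[nhdsWithin (0:ℝ) {(0:ℝ)}ᶜ]
      fun t => t ^ n := by
    have hsum2 : ∀ t : ℝ, (∑ j ∈ Finset.range (n+1), b j * t ^ j) = p.eval t - t := by
      intro t
      rw [hpeval t]
      have h2 : (∑ j ∈ Finset.range (n+1), (if j = 1 then (1:ℝ) else 0) * t ^ j) = t := by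
        rw [Finset.sum_eq_single_of_mem 1 (Finset.mem_range.mpr (by omega))]
        · simp
        · intro k hk hk1; simp [hk1]
      calc (∑ j ∈ Finset.range (n+1), b j * t ^ j)
          = (∑ j ∈ Finset.range (n+1), c j * t ^ j)
            - ∑ j ∈ Finset.range (n+1), (if j = 1 then (1:ℝ) else 0) * t ^ j := by
            rw [← Finset.sum_sub_distrib]
            exact Finset.sum_congr rfl fun j _ => by rw [hb_def]; ring
        _ = (∑ j ∈ Finset.range (n+1), c j * t ^ j) - t := by rw [h2]
    have : (fun t : ℝ => ∑ j ∈ Finset.range (n+1), b j * t ^ j)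
        = fun t : ℝ => p.eval t - t := funext hsum2
    rw [this]
    exact hpo.mono nhdsWithin_le_nhds
  obtain ⟨m, rfl⟩ : ∃ m, n = m + 1 := ⟨n - 1, by omega⟩
  have hbz := poly_isLittleO_zero (m := m + 1) b hbo
  refine ⟨hφ0, ?_, ?_⟩
  · have h1 := hbz 1 (by omega)
    have hc1 : c 1 = 1 := by
      have h2 : c 1 - 1 = 0 := by simpa [hb_def] using h1
      linarith
    simp only [hc_def] at hc1
    simpa [iteratedDeriv_one] using hc1
  · intro k hk2 hkn
    have h1 := hbz k hkn
    have hk1 : k ≠ 1 := by omega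
    have h2 : c k = 0 := by simpa [hb_def, hk1] using h1
    simp only [hc_def] at h2
    have hfac : (Nat.factorial k : ℝ) ≠ 0 := Nat.cast_ne_zero.mpr (Nat.factorial_ne_zero k)
    field_simp at h2
    simpa using h2
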